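/- Let g = W(∞), let M be a g-module satisfying the large annihilator condition for g^≤ = g^{−1} ⊕ g^0 (for each m ∈ M there is n with t_n ∩ g^≤ ⊆ Ann_g(m)). If M ≠ 0 then M^{g^{−1}} := {m ∈ M : ∂_j · m = 0 for all j} is nonzero. -/
import Mathlib


noncomputable section

open scoped TensorProduct

/-- The natural module V, a countable-dimensional vector space with basis ξ_i. -/
abbrev Vnat : Type := ℕ →₀ ℂ

/-- The infinite Grassmann algebra Λ(∞), realized as the exterior algebra of V. -/
abbrev Lam : Type := ExteriorAlgebra ℂ Vnat

/-- The odd generator ξ_i of Λ(∞). -/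
def xi (i : ℕ) : Lam := ExteriorAlgebra.ι ℂ (Finsupp.single i 1)

/-- The Grassmann monomial ξ_{i_1}⋯ξ_{i_k} for a finite set of indices i_1 < ⋯ < i_k. -/
def xiM (s : Finset ℕ) : Lam := ((s.sort (· ≤ ·)).map xi).prod

/-- The odd superderivation ∂_j of Λ(∞), realized as left contraction with the j-th
coordinate functional. -/
def del (j : ℕ) : Module.End ℂ Lam :=
  CliffordAlgebra.contractLeft (Q := (0 : QuadraticForm ℂ Vnat)) (Finsupp.lapply j)

/-- The element ξ^a ∂_j of W(∞), as an operator on Λ(∞). -/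
def op (a : Finset ℕ) (j : ℕ) : Module.End ℂ Lam :=
  (LinearMap.mulLeft ℂ (xiM a)) ∘ₗ del j

/-- The degree-k component W(∞)^k, spanned by the ξ^a∂_j with |a| = k+1. -/
def Wcomp (k : ℤ) : Submodule ℂ (Module.End ℂ Lam) :=
  Submodule.span ℂ {X | ∃ (a : Finset ℕ) (j : ℕ), (a.card : ℤ) = k + 1 ∧ X = op a j}

/-- W(∞), the span of all ξ^a∂_j inside End(Λ(∞)). -/
def Wspan : Submodule ℂ (Module.End ℂ Lam) :=
  Submodule.span ℂ {X | ∃ (a : Finset ℕ) (j : ℕ), X = op a j}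

/-- ξ^a∂_j as an element of W(∞). -/
def opW (a : Finset ℕ) (j : ℕ) : ↥Wspan :=
  ⟨op a j, Submodule.subset_span ⟨a, j, rfl⟩⟩

/-- ρ is a representation of the Lie superalgebra W(∞) on M: it intertwines the
super-bracket of homogeneous elements with the super-commutator of operators. -/
def IsSuperRep (M : Type) [AddCommGroup M] [Module ℂ M]
    (ρ : ↥Wspan →ₗ[ℂ] Module.End ℂ M) : Prop :=
  ∀ (i j : ℤ) (x y : Module.End ℂ Lam) (hx : x ∈ Wspan) (hy : y ∈ Wspan)
    (hxy : x ∘ₗ y - ((-1 : ℂ)) ^ (i * j) • (y ∘ₗ x) ∈ Wspan),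
    x ∈ Wcomp i → y ∈ Wcomp j →
    ρ ⟨x ∘ₗ y - ((-1 : ℂ)) ^ (i * j) • (y ∘ₗ x), hxy⟩
      = ρ ⟨x, hx⟩ * ρ ⟨y, hy⟩ - ((-1 : ℂ)) ^ (i * j) • (ρ ⟨y, hy⟩ * ρ ⟨x, hx⟩)
-- auxiliary lemmas
lemma xiM_empty : xiM ∅ = 1 := by
  rw [xiM, Finset.sort_empty, List.map_nil, List.prod_nil]

lemma op_empty (j : ℕ) : op ∅ j = del j := by
  rw [op, xiM_empty, LinearMap.mulLeft_one, LinearMap.id_comp]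

lemma del_anticomm (i j : ℕ) :
    del i ∘ₗ del j - ((-1 : ℂ)) ^ ((-1 : ℤ) * (-1)) • (del j ∘ₗ del i) = 0 := by
  have hc : ((-1 : ℂ)) ^ ((-1 : ℤ) * (-1)) = -1 := by norm_num
  refine LinearMap.ext fun x => ?_
  simp only [LinearMap.sub_apply, LinearMap.comp_apply, LinearMap.smul_apply,
    LinearMap.zero_apply, hc, neg_one_smul, LinearMap.neg_apply]
  rw [sub_neg_eq_add, del, del, CliffordAlgebra.contractLeft_comm, neg_add_cancel]

lemma op_empty_mem (j : ℕ) : op (∅ : Finset ℕ) j ∈ Wcomp (-1) :=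
  Submodule.subset_span ⟨∅, j, by simp, rfl⟩

/-- a nonzero W(∞)-module satisfying the large annihilator condition for
g^≤ = g^{−1} ⊕ g^0 has a nonzero vector annihilated by all ∂_j, i.e. M^{g^{−1}} ≠ 0. -/
theorem stmt15 (M : Type) [AddCommGroup M] [Module ℂ M]
    (ρ : ↥Wspan →ₗ[ℂ] Module.End ℂ M) (hrep : IsSuperRep M ρ)
    (hlac : ∀ m : M, ∃ n : ℕ, ∀ (a : Finset ℕ) (j : ℕ),
      n ≤ j → (∀ i ∈ a, n ≤ i) → a.card ≤ 1 → ρ (opW a j) m = 0)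
    (hnz : ∃ m : M, m ≠ 0) :
    ∃ m : M, m ≠ 0 ∧ ∀ j : ℕ, ρ (opW ∅ j) m = 0 := by
  set D : ℕ → Module.End ℂ M := fun j => ρ (opW ∅ j) with hD
  have key : ∀ i j : ℕ, D i * D j + D j * D i = 0 := by
    intro i j
    have hxy : op ∅ i ∘ₗ op ∅ j - ((-1 : ℂ)) ^ ((-1 : ℤ) * (-1)) • (op ∅ j ∘ₗ op ∅ i)
        ∈ Wspan := by
      rw [op_empty, op_empty, del_anticomm]; exact Wspan.zero_mem
    have h := hrep (-1) (-1) (op ∅ i) (op ∅ j) (opW ∅ i).2 (opW ∅ j).2 hxy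
      (op_empty_mem i) (op_empty_mem j)
    have hz : (⟨op ∅ i ∘ₗ op ∅ j - ((-1 : ℂ)) ^ ((-1 : ℤ) * (-1)) • (op ∅ j ∘ₗ op ∅ i),
        hxy⟩ : ↥Wspan) = 0 :=
      Subtype.ext (by
        show op ∅ i ∘ₗ op ∅ j - ((-1 : ℂ)) ^ ((-1 : ℤ) * (-1)) • (op ∅ j ∘ₗ op ∅ i)
          = (0 : Module.End ℂ Lam)
        rw [op_empty, op_empty]; exact del_anticomm i j)
    rw [hz, map_zero] at h
    have hc : ((-1 : ℂ)) ^ ((-1 : ℤ) * (-1)) = -1 := by norm_num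
    rw [hc, neg_one_smul, sub_neg_eq_add] at h
    exact h.symm
  have key' : ∀ (i j : ℕ) (m : M), D i (D j m) + D j (D i m) = 0 := by
    intro i j m
    have h := congrFun (congrArg (DFunLike.coe) (key i j)) m
    simpa using h
  have sq : ∀ (i : ℕ) (m : M), D i (D i m) = 0 := by
    intro i m
    have h := key' i i m
    have h2 : (2 : ℂ) • D i (D i m) = 0 := by rw [two_smul]; exact h
    simpa using (smul_eq_zero.mp h2).resolve_left (by norm_num)
  have anti : ∀ (i j : ℕ) (m : M), D i (D j m) = - D j (D i m) := fun i j m =>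
    eq_neg_of_add_eq_zero_left (key' i j m)
  have main : ∀ (n : ℕ) (m : M), m ≠ 0 → (∀ j, n ≤ j → D j m = 0) →
      ∃ m' : M, m' ≠ 0 ∧ ∀ j : ℕ, D j m' = 0 := by
    intro n
    induction n with
    | zero => exact fun m hm h => ⟨m, hm, fun j => h j (Nat.zero_le j)⟩
    | succ n ih =>
      intro m hm h
      by_cases hn : D n m = 0
      · refine ih m hm (fun j hj => ?_)
        by_cases hje : j = n
        · rw [hje]; exact hn
        · exact h j (Nat.lt_of_le_of_ne hj (Ne.symm hje))
      · refine ih (D n m) hn (fun j hj => ?_)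
        by_cases hje : j = n
        · rw [hje]; exact sq n m
        · rw [anti j n m, h j (Nat.lt_of_le_of_ne hj (Ne.symm hje)), map_zero, neg_zero]
  obtain ⟨m, hm⟩ := hnz
  obtain ⟨n, hn⟩ := hlac m
  exact main n m hm (fun j hj => hn ∅ j hj (by simp) (by simp))
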